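/- For all positive integers s, p and every integer n ≥ s·p + 2, the number |A^(s)_{p,n}| satisfies the linear recurrence |A^(s)_{p,n}| = Σ_{i=0}^{s} |A^(s)_{p, n−1−i·p}|. -/

import Mathlib

/-- The collection of sub-multisets `F` of the multiset consisting of `s` copies of each of
`1, …, n-1` together with one copy of `n`, such that `n ∈ F` and `min F ≥ p * |F|`. -/
def SchreierMultisets (s p n : ℕ) : Finset (Multiset ℕ) :=
  (((Finset.Ico 1 n).val.bind fun k => Multiset.replicate s k) + {n}).powerset.toFinset
    |>.filter fun F => n ∈ F ∧ ∀ x ∈ F, p * Multiset.card F ≤ x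

namespace SchreierAux

open Multiset

/-- The reconstruction map: shift everything up by `i*p+1` and add `i` copies of the
new minimum value. -/
def fmap (p i : ℕ) (G : Multiset ℕ) : Multiset ℕ :=
  G.map (· + (i * p + 1)) + Multiset.replicate i (p * (Multiset.card G + i))

lemma card_fmap (p i : ℕ) (G : Multiset ℕ) :
    Multiset.card (fmap p i G) = Multiset.card G + i := by
  simp [fmap]

lemma fmap_injective (p i : ℕ) : Function.Injective (fmap p i) := by
  intro G G' h
  have hc : Multiset.card G = Multiset.card G' := by
    have := congrArg Multiset.card h
    simpa [card_fmap] using this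
  rw [fmap, fmap, hc] at h
  have h2 : G.map (· + (i * p + 1)) = G'.map (· + (i * p + 1)) := add_right_cancel h
  exact Multiset.map_injective (fun a b hab => by omega) h2

lemma count_shift (c x : ℕ) (G : Multiset ℕ) :
    Multiset.count x (G.map (· + c)) = if c ≤ x then Multiset.count (x - c) G else 0 := by
  split_ifs with h
  · conv_lhs => rw [show x = (x - c) + c by omega]
    exact Multiset.count_map_eq_count' _ _ (fun a b hab => by omega) _
  · rw [Multiset.count_eq_zero]
    intro hx
    obtain ⟨a, _, ha⟩ := Multiset.mem_map.mp hx
    omega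

lemma count_S (s n x : ℕ) :
    Multiset.count x (((Finset.Ico 1 n).val.bind fun k => Multiset.replicate s k) + {n})
      = (if 1 ≤ x ∧ x < n then s else 0) + (if x = n then 1 else 0) := by
  rw [Multiset.count_add, Multiset.count_bind, Multiset.count_singleton]
  congr 1
  simp only [Multiset.count_replicate]
  rw [← Finset.sum_eq_multiset_sum, Finset.sum_ite_eq']
  simp [Finset.mem_Ico]

lemma mem_schreier_iff {s p n : ℕ} {F : Multiset ℕ} :
    F ∈ SchreierMultisets s p n ↔
      (∀ x, F.count x ≤ (if 1 ≤ x ∧ x < n then s else 0) + (if x = n then 1 else 0))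
      ∧ n ∈ F ∧ ∀ x ∈ F, p * Multiset.card F ≤ x := by
  rw [SchreierMultisets, Finset.mem_filter, Multiset.mem_toFinset, Multiset.mem_powerset,
    Multiset.le_iff_count]
  simp only [count_S]

lemma fmap_mem {s p n i : ℕ} (hs : 1 ≤ s) (hp : 1 ≤ p) (hi : i ≤ s) (hn : s * p + 2 ≤ n)
    {G : Multiset ℕ} (hG : G ∈ SchreierMultisets s p (n - 1 - i * p)) :
    fmap p i G ∈ SchreierMultisets s p n := by
  rw [mem_schreier_iff] at hG ⊢
  obtain ⟨hcount, hmem, hmin⟩ := hG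
  set n' := n - 1 - i * p with hn'
  set m := Multiset.card G with hm
  have hipsp : i * p ≤ s * p := Nat.mul_le_mul_right p hi
  have hn'' : n' + 1 + i * p = n := by omega
  have hm1 : 1 ≤ m := by
    rw [hm]
    exact Multiset.card_pos_iff_exists_mem.mpr ⟨n', hmem⟩
  have hpm : p * m ≤ n' := hmin n' hmem
  have hple : 1 ≤ p * m := by
    calc 1 = 1 * 1 := by ring
    _ ≤ p * m := Nat.mul_le_mul hp hm1
  have e1 : p * (m + i) = p * m + i * p := by ring
  have hpM : p * (m + i) ≤ n - 1 := by omega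
  refine ⟨?_, ?_, ?_⟩
  · intro x
    rw [fmap, Multiset.count_add, count_shift, Multiset.count_replicate, ← hm]
    have hzero : Multiset.count (p * m - 1) G = 0 := by
      rw [Multiset.count_eq_zero]
      intro h
      have := hmin _ h
      omega
    by_cases hx : x = p * (m + i)
    · subst hx
      have hc1 : p * (m + i) - (i * p + 1) = p * m - 1 := by omega
      rw [if_pos (by omega), hc1, hzero, if_pos rfl, if_pos (by omega : 1 ≤ p * (m+i) ∧ p * (m+i) < n),
        if_neg (by omega : ¬ p * (m + i) = n)]
      omega
    · rw [if_neg (show ¬ p * (m + i) = x from fun h => hx h.symm)]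
      by_cases hx2 : i * p + 1 ≤ x
      · rw [if_pos hx2]
        have hy := hcount (x - (i * p + 1))
        split_ifs at hy ⊢ <;> omega
      · rw [if_neg hx2]
        split_ifs <;> omega
  · rw [fmap]
    refine Multiset.mem_add.mpr (Or.inl ?_)
    exact Multiset.mem_map.mpr ⟨n', hmem, by omega⟩
  · intro x hx
    rw [card_fmap, ← hm]
    rcases Multiset.mem_add.mp hx with h | h
    · obtain ⟨a, ha, rfl⟩ := Multiset.mem_map.mp h
      have := hmin a ha
      omega
    · rw [Multiset.eq_of_mem_replicate h, ← hm]

lemma count_min_fmap {p i : ℕ} (hp : 1 ≤ p) {G : Multiset ℕ}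
    (hmin : ∀ x ∈ G, p * Multiset.card G ≤ x) :
    Multiset.count (p * (Multiset.card G + i)) (fmap p i G) = i := by
  rw [fmap, Multiset.count_add, count_shift, Multiset.count_replicate, if_pos rfl]
  have e1 : p * (Multiset.card G + i) = p * Multiset.card G + i * p := by ring
  split_ifs with h
  · have : Multiset.count (p * (Multiset.card G + i) - (i * p + 1)) G = 0 := by
      rw [Multiset.count_eq_zero]
      intro hx
      have := hmin _ hx
      omega
    omega
  · omega

lemma exists_rep {s p n : ℕ} (hs : 1 ≤ s) (hp : 1 ≤ p) (hn : s * p + 2 ≤ n)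
    {F : Multiset ℕ} (hF : F ∈ SchreierMultisets s p n) :
    ∃ i, i ≤ s ∧ ∃ G ∈ SchreierMultisets s p (n - 1 - i * p), fmap p i G = F := by
  rw [mem_schreier_iff] at hF
  obtain ⟨hcount, hmem, hmin⟩ := hF
  set M := Multiset.card F with hM
  set i := Multiset.count (p * M) F with hidef
  have hM1 : 1 ≤ M := by
    rw [hM]; exact Multiset.card_pos_iff_exists_mem.mpr ⟨n, hmem⟩
  have hiM : i ≤ M := by
    rw [hidef, hM]; exact Multiset.count_le_card _ _
  have hpMn : p * M ≤ n := hmin n hmem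
  have hpsp : p ≤ s * p := Nat.le_mul_of_pos_left p hs
  have hpMlt : p * M < n := by
    rcases lt_or_eq_of_le hpMn with h | h
    · exact h
    · exfalso
      have hall : ∀ x ∈ F, x = n := by
        intro x hx
        have h1 := hmin x hx
        have h2 := hcount x
        have h3 : 1 ≤ Multiset.count x F := Multiset.one_le_count_iff_mem.mpr hx
        split_ifs at h2 <;> omega
      have hrep : F = Multiset.replicate M n := by
        rw [hM]; exact Multiset.eq_replicate_card.mpr hall
      have hcn := hcount n
      rw [hrep, Multiset.count_replicate, if_pos rfl] at hcn
      split_ifs at hcn <;>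
      · -- M ≤ 1, so M = 1, p = n, contradiction
        have hMe : M = 1 := by omega
        rw [hMe, mul_one] at h
        omega
  have hi_s : i ≤ s := by
    have h2 := hcount (p * M)
    rw [← hidef] at h2
    split_ifs at h2 <;> omega
  set F' := F - Multiset.replicate i (p * M) with hF'
  have hrep_le : Multiset.replicate i (p * M) ≤ F := by
    rw [Multiset.le_iff_count]
    intro x
    rw [Multiset.count_replicate]
    split_ifs with h
    · rw [← h]
    · omega
  have hFsplit : F' + Multiset.replicate i (p * M) = F := tsub_add_cancel_of_le hrep_le
  have hcardF' : Multiset.card F' = M - i := by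
    have := congrArg Multiset.card hFsplit
    simp at this
    omega
  have hcountF' : ∀ x, Multiset.count x F' =
      Multiset.count x F - (if p * M = x then i else 0) := by
    intro x
    rw [hF', Multiset.count_sub, Multiset.count_replicate]
  have hgt : ∀ x ∈ F', p * M + 1 ≤ x := by
    intro x hx
    have h1 : x ∈ F := Multiset.mem_of_le tsub_le_self hx
    have h2 := hmin x h1
    have h3 : x ≠ p * M := by
      intro hxe
      have h4 := hcountF' x
      rw [hxe, if_pos rfl] at h4
      have h5 : 0 < Multiset.count (p * M) F' := Multiset.count_pos.mpr (hxe ▸ hx)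
      omega
    omega
  have hipM : i * p ≤ p * M := by
    calc i * p = p * i := by ring
    _ ≤ p * M := Nat.mul_le_mul_left p hiM
  set G := F'.map (· - (i * p + 1)) with hG
  have hcardG : Multiset.card G = M - i := by
    rw [hG, Multiset.card_map, hcardF']
  have hmapback : G.map (· + (i * p + 1)) = F' := by
    rw [hG, Multiset.map_map]
    conv_rhs => rw [← Multiset.map_id F']
    apply Multiset.map_congr rfl
    intro x hx
    have := hgt x hx
    simp only [Function.comp_apply, Multiset.map_id, id_eq]
    omega
  have hfmap : fmap p i G = F := by
    rw [fmap, hmapback, hcardG, show M - i + i = M by omega, hFsplit]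
  refine ⟨i, hi_s, G, ?_, hfmap⟩
  rw [mem_schreier_iff]
  set n' := n - 1 - i * p with hn'
  have hipsp : i * p ≤ s * p := Nat.mul_le_mul_right p hi_s
  have hn'' : n' + 1 + i * p = n := by omega
  have hMi : i = M ∨ i * p + p ≤ p * M := by
    rcases eq_or_lt_of_le hiM with h | h
    · exact Or.inl h
    · right
      calc i * p + p = p * (i + 1) := by ring
      _ ≤ p * M := Nat.mul_le_mul_left p h
  refine ⟨?_, ?_, ?_⟩
  · intro y
    have hcG : Multiset.count (y + (i * p + 1)) F' = Multiset.count y G := by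
      have h := count_shift (i * p + 1) (y + (i * p + 1)) G
      rw [hmapback] at h
      rw [h, if_pos (by omega), show y + (i * p + 1) - (i * p + 1) = y by omega]
    have h1 : Multiset.count (y + (i * p + 1)) F' ≤ Multiset.count (y + (i * p + 1)) F :=
      Multiset.count_le_of_le _ tsub_le_self
    have h2 := hcount (y + (i * p + 1))
    have h4 : p * M + 1 ≤ y + (i * p + 1) ∨ Multiset.count (y + (i * p + 1)) F' = 0 := by
      by_cases hc : p * M + 1 ≤ y + (i * p + 1)
      · exact Or.inl hc
      · right
        rw [Multiset.count_eq_zero]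
        intro hmm
        exact hc (hgt _ hmm)
    have h5 : Multiset.count (y + (i * p + 1)) F' ≤ M - i := by
      calc Multiset.count (y + (i * p + 1)) F' ≤ Multiset.card F' := Multiset.count_le_card _ _
      _ = M - i := hcardF'
    split_ifs at h2 ⊢ <;> omega
  · have hnF' : n ∈ F' := by
      have h6 := hcountF' n
      rw [if_neg (by omega)] at h6
      have h7 : 0 < Multiset.count n F := Multiset.count_pos.mpr hmem
      rw [← Multiset.count_pos, h6]
      omega
    exact Multiset.mem_map.mpr ⟨n, hnF', by omega⟩
  · intro y hy
    obtain ⟨x, hx, rfl⟩ := Multiset.mem_map.mp hy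
    have h1 := hgt x hx
    rw [hcardG]
    have e2 : p * (M - i) + p * i = p * M := by
      rw [← Nat.mul_add]
      congr 1
      omega
    have e3 : p * i = i * p := by ring
    omega

end SchreierAux

theorem card_schreierMultisets_recurrence (s p n : ℕ) (hs : 1 ≤ s) (hp : 1 ≤ p)
    (hn : s * p + 2 ≤ n) :
    (SchreierMultisets s p n).card =
      ∑ i ∈ Finset.range (s + 1), (SchreierMultisets s p (n - 1 - i * p)).card := by
  classical
  have key : SchreierMultisets s p n =
      (Finset.range (s + 1)).biUnion
        (fun i => (SchreierMultisets s p (n - 1 - i * p)).image (SchreierAux.fmap p i)) := by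
    ext F
    simp only [Finset.mem_biUnion, Finset.mem_range, Finset.mem_image]
    constructor
    · intro hF
      obtain ⟨i, his, G, hG, hfe⟩ := SchreierAux.exists_rep hs hp hn hF
      exact ⟨i, by omega, G, hG, hfe⟩
    · rintro ⟨i, hi, G, hG, rfl⟩
      exact SchreierAux.fmap_mem hs hp (by omega) hn hG
  rw [key, Finset.card_biUnion]
  · exact Finset.sum_congr rfl fun i _ =>
      Finset.card_image_of_injective _ (SchreierAux.fmap_injective p i)
  · intro a ha b hb hab
    rw [Function.onFun, Finset.disjoint_left]
    rintro F hFa hFb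
    apply hab
    obtain ⟨Ga, hGa, rfl⟩ := Finset.mem_image.mp hFa
    obtain ⟨Gb, hGb, hfb⟩ := Finset.mem_image.mp hFb
    have hmina : ∀ x ∈ Ga, p * Multiset.card Ga ≤ x :=
      (SchreierAux.mem_schreier_iff.mp hGa).2.2
    have hminb : ∀ x ∈ Gb, p * Multiset.card Gb ≤ x :=
      (SchreierAux.mem_schreier_iff.mp hGb).2.2
    have ha' := SchreierAux.count_min_fmap (i := a) hp hmina
    have hb' := SchreierAux.count_min_fmap (i := b) hp hminb
    have hcard : Multiset.card Gb + b = Multiset.card Ga + a := by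
      have := congrArg Multiset.card hfb
      rwa [SchreierAux.card_fmap, SchreierAux.card_fmap] at this
    rw [hfb, hcard] at hb'
    omega
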